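/- Let p ∈ (1,∞). For every t > 1 one has ∫_0^1 1/(t−y) dy = ln(t/(t−1)), and ∫_2^∞ (ln(t/(t−1)))^p · t^{p−1} dt = ∞. (Consequently, for the weights w(t) := |t|^{p−1} and σ(t) := |t|^{−p/(p−1)} for |t| > 1, σ(t) := 1 for |t| ≤ 1, the function f := 1_{[0,1)} satisfies ∫_ℝ |f|^p σ dt = 1 while the Hilbert transform H(fσ) = H(1_{[0,1)}) fails to lie in L^p(w), so the two-weight Muckenhoupt A_p condition does not imply boundedness of the Hilbert transform from L^p(σ^{1−p}) to L^p(w).) -/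

import Mathlib

open MeasureTheory Set

theorem statement17 (p : ℝ) (hp : 1 < p) :
    (∀ t : ℝ, 1 < t →
      (∫ y in Set.Ico (0 : ℝ) 1, 1 / (t - y)) = Real.log (t / (t - 1))) ∧
    (∫⁻ t in Set.Ioi (2 : ℝ),
        ENNReal.ofReal ((Real.log (t / (t - 1))) ^ p * t ^ (p - 1))) = ⊤ := by
  constructor
  · intro t ht
    have h1 : (∫ y in Set.Ico (0 : ℝ) 1, 1 / (t - y))
        = ∫ y in Set.Ioc (0 : ℝ) 1, 1 / (t - y) :=
      setIntegral_congr_set Ico_ae_eq_Ioc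
    rw [h1, ← intervalIntegral.integral_of_le (by norm_num : (0:ℝ) ≤ 1)]
    simp only [one_div]
    rw [intervalIntegral.integral_comp_sub_left (fun x => x⁻¹) t]
    rw [integral_inv_of_pos (by linarith) (by linarith)]
    rw [show t - 0 = t by ring]
  · have key : ∀ t ∈ Set.Ioi (2 : ℝ),
        ENNReal.ofReal t⁻¹ ≤ ENNReal.ofReal ((Real.log (t / (t - 1))) ^ p * t ^ (p - 1)) := by
      intro t ht
      simp only [mem_Ioi] at ht
      have htpos : (0:ℝ) < t := by linarith
      have ht1 : (0:ℝ) < t - 1 := by linarith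
      apply ENNReal.ofReal_le_ofReal
      have hlog : t⁻¹ ≤ Real.log (t / (t - 1)) := by
        have h := Real.log_le_sub_one_of_pos (show (0:ℝ) < (t-1)/t by positivity)
        have : Real.log ((t-1)/t) = - Real.log (t/(t-1)) := by
          rw [← Real.log_inv]; congr 1; field_simp
        rw [this] at h
        have h2 : (t - 1) / t - 1 = -t⁻¹ := by field_simp; ring
        linarith [h2 ▸ h]
      have hpow : (t⁻¹) ^ p ≤ (Real.log (t / (t - 1))) ^ p :=
        Real.rpow_le_rpow (by positivity) hlog (by linarith)
      calc t⁻¹ = (t⁻¹) ^ p * t ^ (p - 1) := by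
            rw [Real.inv_rpow htpos.le, ← Real.rpow_neg htpos.le,
              ← Real.rpow_add htpos]
            rw [show -p + (p - 1) = -1 by ring, Real.rpow_neg_one]
        _ ≤ (Real.log (t / (t - 1))) ^ p * t ^ (p - 1) := by
            apply mul_le_mul_of_nonneg_right hpow (by positivity)
    have hmono := setLIntegral_mono' (μ := volume) measurableSet_Ioi key
    rw [eq_top_iff]
    refine le_trans ?_ hmono
    rw [top_le_iff]
    by_contra hfin
    have hmeas : Measurable fun t : ℝ => ENNReal.ofReal t⁻¹ :=
      ENNReal.measurable_ofReal.comp measurable_inv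
    have hint : IntegrableOn (fun t : ℝ => t⁻¹) (Set.Ioi 2) := by
      refine ⟨(measurable_inv.aemeasurable.restrict).aestronglyMeasurable, ?_⟩
      rw [hasFiniteIntegral_iff_norm]
      have : ∀ t ∈ Set.Ioi (2:ℝ), ENNReal.ofReal ‖t⁻¹‖ = ENNReal.ofReal t⁻¹ := by
        intro t ht
        simp only [mem_Ioi] at ht
        rw [Real.norm_eq_abs, abs_of_pos (by positivity)]
      rw [setLIntegral_congr_fun measurableSet_Ioi this]
      exact Ne.lt_top hfin
    have : IntegrableOn (fun t : ℝ => t ^ (-1 : ℝ)) (Set.Ioi 2) := by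
      refine hint.congr_fun (fun t ht => ?_) measurableSet_Ioi
      simp only [mem_Ioi] at ht
      rw [Real.rpow_neg_one]
    rw [integrableOn_Ioi_rpow_iff (by norm_num)] at this
    linarith
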